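/- Let κ ≥ 1 and let t_1 < t_2 < ⋯ < t_κ be positive integers with t_i ≥ i for all i ∈ [κ] (and t_0 = 0), and let σ_b² ≥ 0, σ_DP² ≥ 0. Then (σ_b²/κ²) ∑_{i=1}^κ (t_i − t_{i−1}) ( ∑_{j=i}^κ 1/t_j )² + (σ_DP²/κ²) ∑_{i=1}^κ ( ∑_{j=i}^κ 1/t_j )² ≤ 2(σ_b² + σ_DP²)/κ. -/

import Mathlib

open Finset

lemma maxsum (n : ℕ) :
    ∑ j ∈ Icc 1 n, ∑ k ∈ Icc 1 n, (1 : ℝ) / ((max j k : ℕ) : ℝ) ≤ 2 * n := by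
  induction n with
  | zero => simp
  | succ n ih =>
    have hins : Icc 1 (n + 1) = insert (n + 1) (Icc 1 n) := by
      ext x; simp [Finset.mem_Icc]; omega
    have hnot : (n + 1) ∉ Icc 1 n := by simp
    rw [hins, Finset.sum_insert hnot]
    have h1 : ∑ k ∈ insert (n + 1) (Icc 1 n), (1 : ℝ) / ((max (n+1) k : ℕ) : ℝ) = 1 := by
      have : ∀ k ∈ insert (n + 1) (Icc 1 n),
          (1 : ℝ) / ((max (n+1) k : ℕ) : ℝ) = 1 / (n+1 : ℝ) := by
        intro k hk
        simp only [Finset.mem_insert, Finset.mem_Icc] at hk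
        have : max (n+1) k = n + 1 := by omega
        rw [this]; push_cast; ring
      rw [Finset.sum_congr rfl this, Finset.sum_const]
      rw [Finset.card_insert_of_notMem hnot, Nat.card_Icc]
      simp only [nsmul_eq_mul]
      have : ((n + 1 : ℕ) : ℝ) ≠ 0 := by positivity
      field_simp
      simp
    rw [h1]
    have h2 : ∀ j ∈ Icc 1 n, ∑ k ∈ insert (n + 1) (Icc 1 n), (1 : ℝ) / ((max j k : ℕ) : ℝ)
        = 1 / ((n+1 : ℕ) : ℝ) + ∑ k ∈ Icc 1 n, (1 : ℝ) / ((max j k : ℕ) : ℝ) := by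
      intro j hj
      simp only [Finset.mem_Icc] at hj
      rw [Finset.sum_insert hnot]
      have : max j (n+1) = n + 1 := by omega
      rw [this]
    rw [Finset.sum_congr rfl h2, Finset.sum_add_distrib, Finset.sum_const, Nat.card_Icc]
    simp only [nsmul_eq_mul, Nat.add_sub_cancel]
    have hn : (0:ℝ) < (n:ℝ) + 1 := by positivity
    have hcast : ((n + 1 : ℕ) : ℝ) = (n : ℝ) + 1 := by push_cast; ring
    rw [hcast]
    have hb : (n : ℝ) * (1 / ((n:ℝ)+1)) ≤ 1 := by
      rw [mul_one_div, div_le_one hn]; linarith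
    linarith

lemma filter_ge_Icc (i κ : ℕ) (hi : 1 ≤ i) (g : ℕ → ℝ) :
    ∑ j ∈ Icc i κ, g j = ∑ j ∈ Icc 1 κ, if i ≤ j then g j else 0 := by
  rw [← Finset.sum_filter]
  congr 1
  ext x
  simp only [Finset.mem_Icc, Finset.mem_filter]
  omega

lemma swap_sum (κ : ℕ) (a w : ℕ → ℝ) :
    ∑ i ∈ Icc 1 κ, w i * (∑ j ∈ Icc i κ, a j) ^ 2
      = ∑ j ∈ Icc 1 κ, ∑ k ∈ Icc 1 κ,
          (∑ i ∈ Icc 1 (min j k), w i) * (a j * a k) := by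
  have step1 : ∀ i ∈ Icc 1 κ, w i * (∑ j ∈ Icc i κ, a j) ^ 2
      = ∑ j ∈ Icc 1 κ, ∑ k ∈ Icc 1 κ,
          if i ≤ j ∧ i ≤ k then w i * (a j * a k) else 0 := by
    intro i hi
    have hi1 : 1 ≤ i := (Finset.mem_Icc.mp hi).1
    rw [sq, Finset.sum_mul_sum, Finset.mul_sum]
    rw [filter_ge_Icc i κ hi1]
    refine Finset.sum_congr rfl fun j hj => ?_
    by_cases hij : i ≤ j
    · simp only [hij, if_true, true_and]
      rw [Finset.mul_sum, filter_ge_Icc i κ hi1]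
    · simp [hij]
  rw [Finset.sum_congr rfl step1, Finset.sum_comm]
  refine Finset.sum_congr rfl fun j hj => ?_
  rw [Finset.sum_comm]
  refine Finset.sum_congr rfl fun k hk => ?_
  simp only [Finset.mem_Icc] at hj hk
  have hfil : Finset.filter (fun i => i ≤ j ∧ i ≤ k) (Icc 1 κ) = Icc 1 (min j k) := by
    ext x
    simp only [Finset.mem_Icc, Finset.mem_filter]
    omega
  rw [← Finset.sum_filter, hfil, Finset.sum_mul]

lemma tele (t : ℕ → ℕ) (ht0 : t 0 = 0) (m : ℕ) :
    ∑ i ∈ Icc 1 m, ((t i : ℝ) - (t (i - 1) : ℝ)) = (t m : ℝ) := by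
  induction m with
  | zero => simp [ht0]
  | succ m ih =>
    have hins : Icc 1 (m + 1) = insert (m + 1) (Icc 1 m) := by
      ext x; simp [Finset.mem_Icc]; omega
    rw [hins, Finset.sum_insert (by simp), ih]
    simp

/-- The variance of the mean-of-means statistic under PM-I is `O(1/κ)`. -/
theorem mean_of_means_variance_bound
    (κ : ℕ) (hκ : 1 ≤ κ) (t : ℕ → ℕ) (ht0 : t 0 = 0)
    (hmono : ∀ i, 1 ≤ i → i < κ → t i < t (i + 1))
    (hti : ∀ i ∈ Icc 1 κ, i ≤ t i)
    (σb2 σDP2 : ℝ) (hσb : 0 ≤ σb2) (hσDP : 0 ≤ σDP2) :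
    σb2 / (κ : ℝ) ^ 2 * ∑ i ∈ Icc 1 κ,
        ((t i : ℝ) - (t (i - 1) : ℝ)) * (∑ j ∈ Icc i κ, 1 / (t j : ℝ)) ^ 2
      + σDP2 / (κ : ℝ) ^ 2 * ∑ i ∈ Icc 1 κ, (∑ j ∈ Icc i κ, 1 / (t j : ℝ)) ^ 2
      ≤ 2 * (σb2 + σDP2) / κ := by
  set a : ℕ → ℝ := fun j => 1 / (t j : ℝ) with ha
  -- facts about t
  have hbound : ∀ j ∈ Icc 1 κ, ∀ k ∈ Icc 1 κ,
      ((t (min j k) : ℝ)) * (a j * a k) ≤ 1 / ((max j k : ℕ) : ℝ) ∧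
      ((min j k : ℕ) : ℝ) * (a j * a k) ≤ 1 / ((max j k : ℕ) : ℝ) := by
    intro j hj k hk
    have hj' := Finset.mem_Icc.mp hj
    have hk' := Finset.mem_Icc.mp hk
    have htj := hti j hj
    have htk := hti k hk
    have htjpos : (0:ℝ) < (t j : ℝ) := by
      have : 1 ≤ t j := le_trans hj'.1 htj
      exact_mod_cast Nat.lt_of_lt_of_le Nat.zero_lt_one this
    have htkpos : (0:ℝ) < (t k : ℝ) := by
      have : 1 ≤ t k := le_trans hk'.1 htk
      exact_mod_cast Nat.lt_of_lt_of_le Nat.zero_lt_one this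
    have hjpos : (0:ℝ) < (j:ℝ) := by exact_mod_cast hj'.1
    have hkpos : (0:ℝ) < (k:ℝ) := by exact_mod_cast hk'.1
    have htjR : (j:ℝ) ≤ (t j : ℝ) := by exact_mod_cast htj
    have htkR : (k:ℝ) ≤ (t k : ℝ) := by exact_mod_cast htk
    rcases le_total j k with h | h
    · have hmin : min j k = j := min_eq_left h
      have hmax : max j k = k := max_eq_right h
      rw [hmin, hmax]
      constructor
      · have : (t j : ℝ) * (a j * a k) = 1 / (t k : ℝ) := by
          simp only [ha]; field_simp
        rw [this]
        exact one_div_le_one_div_of_le hkpos htkR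
      · have h1 : a j ≤ 1 / (j:ℝ) := by
          simp only [ha]; exact one_div_le_one_div_of_le hjpos htjR
        have h2 : a k ≤ 1 / (k:ℝ) := by
          simp only [ha]; exact one_div_le_one_div_of_le hkpos htkR
        have ha1 : 0 ≤ a j := by simp only [ha]; positivity
        have ha2 : 0 ≤ a k := by simp only [ha]; positivity
        calc ((j:ℕ):ℝ) * (a j * a k) ≤ (j:ℝ) * (1/(j:ℝ) * (1/(k:ℝ))) := by
              gcongr
          _ = 1 / (k:ℝ) := by field_simp
    · have hmin : min j k = k := min_eq_right h
      have hmax : max j k = j := max_eq_left h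
      rw [hmin, hmax]
      constructor
      · have : (t k : ℝ) * (a j * a k) = 1 / (t j : ℝ) := by
          simp only [ha]; field_simp
        rw [this]
        exact one_div_le_one_div_of_le hjpos htjR
      · have h1 : a j ≤ 1 / (j:ℝ) := by
          simp only [ha]; exact one_div_le_one_div_of_le hjpos htjR
        have h2 : a k ≤ 1 / (k:ℝ) := by
          simp only [ha]; exact one_div_le_one_div_of_le hkpos htkR
        have ha1 : 0 ≤ a j := by simp only [ha]; positivity
        have ha2 : 0 ≤ a k := by simp only [ha]; positivity
        calc ((k:ℕ):ℝ) * (a j * a k) ≤ (k:ℝ) * (1/(j:ℝ) * (1/(k:ℝ))) := by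
              gcongr
          _ = 1 / (j:ℝ) := by
              rw [mul_comm (1/(j:ℝ))]; field_simp
  -- first sum
  have hA : ∑ i ∈ Icc 1 κ, ((t i : ℝ) - (t (i - 1) : ℝ)) * (∑ j ∈ Icc i κ, a j) ^ 2
      ≤ 2 * κ := by
    rw [swap_sum κ a (fun i => (t i : ℝ) - (t (i - 1) : ℝ))]
    calc ∑ j ∈ Icc 1 κ, ∑ k ∈ Icc 1 κ,
          (∑ i ∈ Icc 1 (min j k), ((t i : ℝ) - (t (i - 1) : ℝ))) * (a j * a k)
        ≤ ∑ j ∈ Icc 1 κ, ∑ k ∈ Icc 1 κ, (1 : ℝ) / ((max j k : ℕ) : ℝ) := by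
          refine Finset.sum_le_sum fun j hj => Finset.sum_le_sum fun k hk => ?_
          rw [tele t ht0]
          exact (hbound j hj k hk).1
      _ ≤ 2 * κ := maxsum κ
  -- second sum
  have hB : ∑ i ∈ Icc 1 κ, (∑ j ∈ Icc i κ, a j) ^ 2 ≤ 2 * κ := by
    have : ∑ i ∈ Icc 1 κ, (∑ j ∈ Icc i κ, a j) ^ 2
        = ∑ i ∈ Icc 1 κ, (1:ℝ) * (∑ j ∈ Icc i κ, a j) ^ 2 := by simp
    rw [this, swap_sum κ a (fun _ => (1:ℝ))]
    calc ∑ j ∈ Icc 1 κ, ∑ k ∈ Icc 1 κ, (∑ _i ∈ Icc 1 (min j k), (1:ℝ)) * (a j * a k)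
        ≤ ∑ j ∈ Icc 1 κ, ∑ k ∈ Icc 1 κ, (1 : ℝ) / ((max j k : ℕ) : ℝ) := by
          refine Finset.sum_le_sum fun j hj => Finset.sum_le_sum fun k hk => ?_
          have : (∑ _i ∈ Icc 1 (min j k), (1:ℝ)) = ((min j k : ℕ) : ℝ) := by
            rw [Finset.sum_const, Nat.card_Icc]; simp
          rw [this]
          exact (hbound j hj k hk).2
      _ ≤ 2 * κ := maxsum κ
  have hκpos : (0:ℝ) < (κ:ℝ) := by exact_mod_cast hκ
  have e1 : σb2 / (κ:ℝ)^2 * ∑ i ∈ Icc 1 κ,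
      ((t i : ℝ) - (t (i - 1) : ℝ)) * (∑ j ∈ Icc i κ, a j) ^ 2
      ≤ σb2 / (κ:ℝ)^2 * (2 * κ) :=
    mul_le_mul_of_nonneg_left hA (by positivity)
  have e2 : σDP2 / (κ:ℝ)^2 * ∑ i ∈ Icc 1 κ, (∑ j ∈ Icc i κ, a j) ^ 2
      ≤ σDP2 / (κ:ℝ)^2 * (2 * κ) :=
    mul_le_mul_of_nonneg_left hB (by positivity)
  have key : σb2 / (κ:ℝ)^2 * (2 * κ) + σDP2 / (κ:ℝ)^2 * (2 * κ)
      = 2 * (σb2 + σDP2) / κ := by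
    field_simp
  linarith
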